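/- Let φ ≃ ⟨a₁, ..., a_m⟩ be a diagonalized symmetric bilinear form over a field K of characteristic ≠ 2, and 0 ≤ k ≤ m. Then the k-fold exterior power Λᵏφ is isometric to the orthogonal sum, over all index sets 1 ≤ i₁ < ... < i_k ≤ m, of the one-dimensional forms ⟨a_{i₁}···a_{i_k}⟩. -/

import Mathlib

/-- `B'` is (a model of) the `k`-fold exterior power of the bilinear form `B`:
`W` has dimension `C(dim V, k)` and carries an alternating multilinear wedge map
whose image spans `W` and on which `B'` is given by the determinant pairing
`Λᵏφ(x₁∧...∧x_k, y₁∧...∧y_k) = det(φ(xᵢ, yⱼ))`. -/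
def IsExteriorPower (K : Type*) [Field K] {V W : Type*} [AddCommGroup V] [Module K V]
    [AddCommGroup W] [Module K W] (k : ℕ) (B : LinearMap.BilinForm K V)
    (B' : LinearMap.BilinForm K W) : Prop :=
  Module.finrank K W = (Module.finrank K V).choose k ∧
  ∃ w : AlternatingMap K V W (Fin k),
    Submodule.span K (Set.range fun v : Fin k → V => w v) = ⊤ ∧
    ∀ v u : Fin k → V, B' (w v) (w u) = Matrix.det (Matrix.of fun i j => B (v i) (u j))

/-- If `φ ≃ ⟨a₁, ..., a_m⟩` then `Λᵏφ` is isometric to the orthogonal sum of the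
one-dimensional forms `⟨a_{i₁}···a_{i_k}⟩` over all `1 ≤ i₁ < ... < i_k ≤ m`. -/
theorem extPower_diagonal (K : Type*) [Field K] (hchar : ringChar K ≠ 2)
    {V W : Type*} [AddCommGroup V] [Module K V] [AddCommGroup W] [Module K W]
    (m k : ℕ) (hk : k ≤ m) (a : Fin m → K)
    (B : LinearMap.BilinForm K V) (hsym : ∀ v w, B v w = B w v)
    (bV : Module.Basis (Fin m) K V)
    (hdiag : ∀ i j, B (bV i) (bV j) = if i = j then a i else 0)
    (B' : LinearMap.BilinForm K W) (hext : IsExteriorPower K k B B') :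
    QuadraticMap.Equivalent (LinearMap.BilinMap.toQuadraticMap B')
      (QuadraticMap.weightedSumSquares K
        (fun s : {s : Finset (Fin m) // s.card = k} => ∏ i ∈ s.1, a i)) := by
  classical
  obtain ⟨hdim, w, hspan, hB'⟩ := hext
  haveI : Invertible (2 : K) := invertibleOfRingCharNotDvd (by
    intro h
    rcases (Nat.dvd_prime Nat.prime_two).mp h with h1 | h2
    · haveI := ringChar.eq_iff.mp h1
      exact CharP.char_ne_one K 1 rfl
    · exact hchar h2)
  set ι := {s : Finset (Fin m) // s.card = k} with hι
  let os : (s : ι) → Fin k → Fin m := fun s i => (s.1.orderIsoOfFin s.2 i : Fin m)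
  have hos_inj : ∀ s : ι, Function.Injective (os s) := fun s i j h =>
    (s.1.orderIsoOfFin s.2).injective (Subtype.ext h)
  have hos_mem : ∀ (s : ι) (i), os s i ∈ s.1 := fun s i => (s.1.orderIsoOfFin s.2 i).2
  let e : ι → W := fun s => w (fun i => bV (os s i))
  -- every wedge of basis vectors indexed by an injective map is ± some `e s`
  have key : ∀ f : Fin k → Fin m, Function.Injective f →
      ∃ (s : ι) (σ : Equiv.Perm (Fin k)), ∀ i, f i = os s (σ i) := by
    intro f hf
    refine ⟨⟨Finset.univ.image f, by
      rw [Finset.card_image_of_injective _ hf, Finset.card_univ, Fintype.card_fin]⟩, ?_⟩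
    set s : Finset (Fin m) := Finset.univ.image f with hs
    have hcard : s.card = k := by
      rw [hs, Finset.card_image_of_injective _ hf, Finset.card_univ, Fintype.card_fin]
    let g : Fin k → s := fun i => ⟨f i, by simp [hs]⟩
    have hg : Function.Bijective g := by
      have hginj : Function.Injective g := fun i j h => hf (congrArg Subtype.val h)
      exact (Fintype.bijective_iff_injective_and_card g).mpr
        ⟨hginj, by simp [Fintype.card_coe, hcard]⟩
    refine ⟨(Equiv.ofBijective g hg).trans (s.orderIsoOfFin hcard).toEquiv.symm, fun i => ?_⟩
    show f i = ((s.orderIsoOfFin hcard) _ : Fin m)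
    simp
    rfl
  -- spanning
  have hmem : ∀ v : Fin k → V, w v ∈ Submodule.span K (Set.range e) := by
    intro v
    have hv : w v = w (fun i => ∑ j, bV.repr (v i) j • bV j) := by
      congr 1; ext i; rw [Module.Basis.sum_repr]
    rw [hv]
    rw [show w (fun i => ∑ j, bV.repr (v i) j • bV j)
        = w.toMultilinearMap (fun i => ∑ j, bV.repr (v i) j • bV j) from rfl,
      MultilinearMap.map_sum]
    apply Submodule.sum_mem
    intro f _
    rw [show (w.toMultilinearMap fun i => bV.repr (v i) (f i) • bV (f i))
        = (∏ i, bV.repr (v i) (f i)) • w (fun i => bV (f i)) from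
      MultilinearMap.map_smul_univ _ _ _]
    apply Submodule.smul_mem
    by_cases hf : Function.Injective f
    · obtain ⟨s, σ, hσ⟩ := key f hf
      have : w (fun i => bV (f i)) = w ((fun i => bV (os s i)) ∘ σ) := by
        congr 1; ext i; simp [hσ i]
      rw [this, AlternatingMap.map_perm]
      rcases Int.units_eq_one_or (Equiv.Perm.sign σ) with h | h <;>
        rw [h] <;>
        simp only [Units.smul_def, Units.val_neg, Units.val_one, neg_smul, one_smul]
      · exact Submodule.subset_span ⟨s, rfl⟩
      · exact Submodule.neg_mem _ (Submodule.subset_span ⟨s, rfl⟩)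
    · have hni : ¬ Function.Injective (fun i => bV (f i)) :=
        fun h => hf fun i j hij => h (congrArg bV hij)
      rw [w.map_eq_zero_of_not_injective _ hni]
      exact Submodule.zero_mem _
  have htop : ⊤ ≤ Submodule.span K (Set.range e) := by
    rw [← hspan]
    exact Submodule.span_le.mpr (by rintro _ ⟨v, rfl⟩; exact hmem v)
  have hcard : Fintype.card ι = Module.finrank K W := by
    rw [hdim, Module.finrank_eq_card_basis bV, Fintype.card_fin]
    simp [hι, Fintype.card_finset_len]
  let bW : Module.Basis ι K W := basisOfTopLeSpanOfCardEqFinrank e htop hcard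
  have hbW : ∀ s, bW s = e s := fun s => by
    simp [bW, coe_basisOfTopLeSpanOfCardEqFinrank]
  -- values of B' on e
  have hBe : ∀ s t : ι, B' (e s) (e t) =
      Matrix.det (Matrix.of fun i j => if os s i = os t j then a (os s i) else 0) := by
    intro s t
    rw [hB']
    congr 1
    ext i j
    simp [Matrix.of_apply, hdiag]
  have hBe_diag : ∀ s : ι, B' (e s) (e s) = ∏ i ∈ s.1, a i := by
    intro s
    rw [hBe]
    have : (Matrix.of fun i j => if os s i = os s j then a (os s i) else 0)
        = Matrix.diagonal (fun i => a (os s i)) := by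
      ext i j
      rw [Matrix.of_apply, Matrix.diagonal_apply]
      by_cases h : i = j
      · subst h; simp
      · rw [if_neg h, if_neg (fun hh => h (hos_inj s hh))]
    rw [this, Matrix.det_diagonal]
    exact (Finset.prod_bij (fun i _ => os s i) (fun i _ => hos_mem s i)
      (fun i _ j _ h => hos_inj s h)
      (fun x hx => by
        refine ⟨(s.1.orderIsoOfFin s.2).symm ⟨x, hx⟩, Finset.mem_univ _, ?_⟩
        show ((s.1.orderIsoOfFin s.2) _ : Fin m) = x
        rw [OrderIso.apply_symm_apply])
      (fun i _ => rfl))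
  have hBe_off : ∀ s t : ι, s ≠ t → B' (e s) (e t) = 0 := by
    intro s t hst
    have : ∃ x ∈ s.1, x ∉ t.1 := by
      by_contra h
      push_neg at h
      exact hst (Subtype.ext (Finset.eq_of_subset_of_card_le h (by rw [s.2, t.2])))
    obtain ⟨x, hxs, hxt⟩ := this
    obtain ⟨i₀, -, hi₀⟩ : ∃ i ∈ Finset.univ, os s i = x := by
      refine ⟨(s.1.orderIsoOfFin s.2).symm ⟨x, hxs⟩, Finset.mem_univ _, ?_⟩
      show ((s.1.orderIsoOfFin s.2) _ : Fin m) = x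
      rw [OrderIso.apply_symm_apply]
    rw [hBe]
    apply Matrix.det_eq_zero_of_row_eq_zero i₀
    intro j
    have : os s i₀ ≠ os t j := fun h => hxt (hi₀ ▸ h ▸ hos_mem t j)
    simp [this]
  -- orthogonality for the associated bilinear form
  set Q := LinearMap.BilinMap.toQuadraticMap B' with hQ
  have hortho : (QuadraticMap.associated (R := K) Q).IsOrthoᵢ bW := by
    intro s t hst
    have h1 : B' (bW s) (bW t) = 0 := by rw [hbW, hbW]; exact hBe_off s t hst
    have h2 : B' (bW t) (bW s) = 0 := by rw [hbW, hbW]; exact hBe_off t s (Ne.symm hst)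
    show QuadraticMap.associated (R := K) Q (bW s) (bW t) = 0
    rw [hQ, QuadraticMap.associated_toQuadraticMap, h1, h2, add_zero, smul_zero]
  have hrepr : Q.basisRepr bW = QuadraticMap.weightedSumSquares K
      (fun s : ι => ∏ i ∈ s.1, a i) := by
    rw [QuadraticMap.basisRepr_eq_of_iIsOrtho Q bW hortho]
    congr 1
    ext s
    rw [hbW]
    show B' (e s) (e s) = _
    exact hBe_diag s
  exact ⟨hrepr ▸ Q.isometryEquivBasisRepr bW⟩
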